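/- Let N ≥ 1 and r ≥ 1 be integers, let F_N(t) ∈ ℚ⟦t⟧ be the unique formal power series with F_N(t)·(e^t − T_{N−1}(t)) = t^N/N!, and set A(t) = F_N(t)^r. Then the formal derivative of A satisfies A′(t) = r · A(t) · ( −1/(N+1) − N · ∑_{n≥1} (B_{N,n+1}/(n+1)) · t^n/n! ), where B_{N,m} are the hypergeometric Bernoulli numbers, i.e. the coefficients in F_N(t) = ∑_{m≥0} B_{N,m} t^m/m!. -/

import Mathlib

open PowerSeries

private lemma hyp_coeff_FE (N : ℕ) (F : PowerSeries ℚ) (n : ℕ) :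
    (PowerSeries.coeff n) (F * (PowerSeries.mk fun j => if N ≤ j then ((j.factorial : ℚ))⁻¹ else 0))
      = ∑ i ∈ Finset.range (n+1),
          PowerSeries.coeff i F * (if N ≤ n - i then (((n-i).factorial : ℚ))⁻¹ else 0) := by
  rw [PowerSeries.coeff_mul]
  simp only [coeff_mk]
  exact Finset.Nat.sum_antidiagonal_eq_sum_range_succ
      (fun a b => PowerSeries.coeff a F * (if N ≤ b then ((b.factorial : ℚ))⁻¹ else 0)) n

private lemma hyp_fac_pred (N : ℕ) (hN : 1 ≤ N) :
    (N.factorial : ℚ) = (N : ℚ) * ((N-1).factorial : ℚ) := by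
  rw [← Nat.mul_factorial_pred (by omega : N ≠ 0)]
  push_cast
  ring

/-- The logarithmic-derivative identity (3.14) used in the proof of Theorem 5: with
`A(t) = F_N(t)^r`, where `F_N(t)` is the unique power series with
`F_N(t)·(e^t - T_{N-1}(t)) = t^N/N!`, one has
`A'(t) = r·A(t)·(-1/(N+1) - N·∑_{n≥1} (B_{N,n+1}/(n+1))·t^n/n!)`,
the numbers `B m = B_{N,m}` being the scaled coefficients of `F_N`. -/
theorem hypergeometric_bernoulli_power_derivative
    (N r : ℕ) (hN : 1 ≤ N) (hr : 1 ≤ r)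
    (F : PowerSeries ℚ)
    (hF : F * (PowerSeries.mk fun j => if N ≤ j then ((j.factorial : ℚ))⁻¹ else 0)
        = PowerSeries.mk fun j => if j = N then ((N.factorial : ℚ))⁻¹ else 0)
    (B : ℕ → ℚ)
    (hB : ∀ m : ℕ, B m = (m.factorial : ℚ) * PowerSeries.coeff m F) :
    d⁄dX ℚ (F ^ r)
      = (r : ℚ) • ((F ^ r) *
          PowerSeries.mk (fun m =>
            if m = 0 then -(1 : ℚ) / ((N : ℚ) + 1)
            else -(N : ℚ) * (B (m + 1) / ((m : ℚ) + 1)) * ((m.factorial : ℚ))⁻¹)) := by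
  set E : PowerSeries ℚ := PowerSeries.mk fun j => if N ≤ j then ((j.factorial : ℚ))⁻¹ else 0
    with hE
  set G : PowerSeries ℚ := PowerSeries.mk (fun m =>
            if m = 0 then -(1 : ℚ) / ((N : ℚ) + 1)
            else -(N : ℚ) * (B (m + 1) / ((m : ℚ) + 1)) * ((m.factorial : ℚ))⁻¹) with hG
  have hNfac : ((N.factorial : ℚ)) ≠ 0 := Nat.cast_ne_zero.mpr (Nat.factorial_ne_zero N)
  have hN1fac : (((N-1).factorial : ℚ)) ≠ 0 := Nat.cast_ne_zero.mpr (Nat.factorial_ne_zero _)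
  have hN1 : ((N : ℚ) + 1) ≠ 0 := by positivity
  have hNQ : ((N : ℚ)) ≠ 0 := by
    have : (0:ℚ) < (N:ℚ) := by exact_mod_cast hN
    linarith
  -- constant coefficient of F is 1
  have hF0 : PowerSeries.coeff 0 F = 1 := by
    have h := congrArg (PowerSeries.coeff N) hF
    rw [hyp_coeff_FE] at h
    rw [Finset.sum_eq_single 0 (by
        intro i hi hi0
        have : ¬ (N ≤ N - i) := by omega
        simp [this]) (by simp)] at h
    simp only [Nat.sub_zero, le_refl, if_pos, coeff_mk] at h
    exact mul_right_cancel₀ (inv_ne_zero hNfac) (by rw [one_mul]; exact h)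
  -- next coefficient of F is -1/(N+1)
  have hF1 : PowerSeries.coeff 1 F = -((N : ℚ) + 1)⁻¹ := by
    have h := congrArg (PowerSeries.coeff (N+1)) hF
    rw [hyp_coeff_FE] at h
    rw [show N + 1 + 1 = N + 2 by ring, Finset.sum_range_succ', Finset.sum_range_succ'] at h
    have hz : ∀ i ∈ Finset.range N,
        PowerSeries.coeff (i+1+1) F *
          (if N ≤ N + 1 - (i+1+1) then (((N+1-(i+1+1)).factorial : ℚ))⁻¹ else 0) = 0 := by
      intro i hi
      have : ¬ (N ≤ N + 1 - (i+1+1)) := by omega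
      rw [if_neg this, mul_zero]
    rw [Finset.sum_eq_zero hz] at h
    have e1 : N + 1 - (0+1) = N := by omega
    simp only [e1, Nat.sub_zero, coeff_mk, zero_add, hF0] at h
    rw [if_pos (le_refl N), if_pos (by omega : N ≤ N + 1), if_neg (by omega : ¬ (N+1 = N))] at h
    have hfac : (((N+1).factorial : ℚ)) = ((N:ℚ)+1) * (N.factorial : ℚ) := by
      rw [Nat.factorial_succ]; push_cast; ring
    rw [hfac] at h
    field_simp at h
    have h2 : (PowerSeries.coeff 1 F) * ((N:ℚ)+1) = -1 := by
      apply mul_right_cancel₀ hNfac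
      linear_combination (N.factorial : ℚ) * h
    field_simp
    linear_combination h2
  -- the series X * G in closed form
  have hXG : X * G = C (N : ℚ) - C (N : ℚ) * F - X := by
    have hc : (PowerSeries.constantCoeff) F = 1 := by
      rw [← PowerSeries.coeff_zero_eq_constantCoeff_apply]; exact hF0
    ext n
    rcases n with _ | n
    · simp [hc]
    · rw [PowerSeries.coeff_succ_X_mul]
      rcases n with _ | n
      · simp only [hG, coeff_mk, if_pos rfl, map_sub, PowerSeries.coeff_C,
          PowerSeries.coeff_X, PowerSeries.coeff_C_mul, hF1]
        norm_num
        field_simp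
        ring
      · have hne1 : (n + 1 : ℕ) ≠ 0 := by omega
        have hne2 : (n + 1 + 1 : ℕ) ≠ 0 := by omega
        have hne3 : ¬ ((n + 1 + 1 : ℕ) = 1) := by omega
        simp only [hG, coeff_mk, if_neg hne1, map_sub, PowerSeries.coeff_C,
          if_neg hne2, PowerSeries.coeff_X, if_neg hne3, PowerSeries.coeff_C_mul, hB (n+1+1)]
        have h1 : ((n:ℚ) + 1 + 1) ≠ 0 := by positivity
        have h2 : (((n+1).factorial : ℚ)) ≠ 0 := Nat.cast_ne_zero.mpr (Nat.factorial_ne_zero _)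
        have hfac : (((n+1+1).factorial : ℚ)) = ((n:ℚ)+1+1) * ((n+1).factorial : ℚ) := by
          rw [Nat.factorial_succ]; push_cast; ring
        rw [hfac]
        push_cast
        field_simp
        ring
  -- M : the monomial X^(N-1)/(N-1)!
  set M : PowerSeries ℚ := PowerSeries.monomial (N-1) (((N-1).factorial : ℚ))⁻¹ with hM
  have hMne : M ≠ 0 := by
    intro h
    have := congrArg (PowerSeries.coeff (N-1)) h
    simp only [hM, PowerSeries.coeff_monomial, if_pos rfl, map_zero] at this
    exact (inv_ne_zero hN1fac) this
  -- RHS of hF as a monomial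
  have hRHS : (PowerSeries.mk fun j => if j = N then ((N.factorial : ℚ))⁻¹ else 0)
      = PowerSeries.monomial N ((N.factorial : ℚ))⁻¹ := by
    ext n
    simp [PowerSeries.coeff_monomial]
  -- derivative of E
  have hE' : d⁄dX ℚ E = E + M := by
    ext n
    rw [PowerSeries.coeff_derivative]
    simp only [hE, coeff_mk, map_add, hM, PowerSeries.coeff_monomial]
    by_cases h1 : N ≤ n
    · have h2 : N ≤ n + 1 := by omega
      have h3 : n ≠ N - 1 := by omega
      rw [if_pos h1, if_pos h2, if_neg h3]
      have : (((n+1).factorial : ℚ)) = ((n:ℚ)+1) * (n.factorial : ℚ) := by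
        rw [Nat.factorial_succ]; push_cast; ring
      rw [this]
      have hn1 : ((n:ℚ)+1) ≠ 0 := by positivity
      have hnf : ((n.factorial : ℚ)) ≠ 0 := Nat.cast_ne_zero.mpr (Nat.factorial_ne_zero _)
      field_simp
      ring
    · by_cases h2 : N ≤ n + 1
      · have h3 : n = N - 1 := by omega
        have h4 : n + 1 = N := by omega
        rw [if_neg h1, if_pos h2, if_pos h3, h4]
        have h5 : ((n:ℚ) + 1) = (N:ℚ) := by exact_mod_cast congrArg (Nat.cast : ℕ → ℚ) h4
        rw [h5, hyp_fac_pred N hN]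
        field_simp
        ring
      · have h3 : n ≠ N - 1 := by omega
        rw [if_neg h1, if_neg h2, if_neg h3]
        simp
  -- derivative of the monomial RHS
  have hdRHS : d⁄dX ℚ (PowerSeries.monomial N ((N.factorial : ℚ))⁻¹) = M := by
    ext n
    rw [PowerSeries.coeff_derivative]
    simp only [PowerSeries.coeff_monomial, hM]
    by_cases h : n + 1 = N
    · have h3 : n = N - 1 := by omega
      rw [if_pos h, if_pos h3]
      have h5 : ((n:ℚ) + 1) = (N:ℚ) := by exact_mod_cast congrArg (Nat.cast : ℕ → ℚ) h
      rw [h5, hyp_fac_pred N hN]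
      field_simp
    · have h3 : n ≠ N - 1 := by omega
      rw [if_neg h, if_neg h3, zero_mul]
  -- differentiate the defining equation
  have eq1 : F * E + F * M + E * d⁄dX ℚ F = M := by
    have h := congrArg (d⁄dX ℚ) hF
    rw [Derivation.leibniz, hE', hRHS, hdRHS, smul_eq_mul, smul_eq_mul] at h
    linear_combination h
  -- X * M in terms of F * E
  have hXM : X * M = C (N : ℚ) * (F * E) := by
    rw [hF, hRHS]
    ext n
    rcases n with _ | n
    · have h0 : (PowerSeries.constantCoeff) (PowerSeries.monomial N ((N.factorial : ℚ))⁻¹) = 0 := by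
        rw [← PowerSeries.coeff_zero_eq_constantCoeff_apply, PowerSeries.coeff_monomial,
          if_neg (by omega : ¬ (0 = N))]
      rw [PowerSeries.coeff_zero_eq_constantCoeff_apply, PowerSeries.coeff_zero_eq_constantCoeff_apply,
        map_mul, map_mul, PowerSeries.constantCoeff_X, zero_mul, h0, mul_zero]
    · rw [PowerSeries.coeff_succ_X_mul, PowerSeries.coeff_C_mul]
      simp only [hM, PowerSeries.coeff_monomial]
      by_cases h : n = N - 1
      · have h4 : n + 1 = N := by omega
        rw [if_pos h, if_pos h4, hyp_fac_pred N hN]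
        field_simp
      · have h4 : n + 1 ≠ N := by omega
        rw [if_neg h, if_neg h4, mul_zero]
  -- key identity : X F' + X F = N F - N F²
  have key : X * d⁄dX ℚ F + X * F = C (N : ℚ) * F - C (N : ℚ) * (F * F) := by
    apply mul_right_cancel₀ hMne
    linear_combination (d⁄dX ℚ F + F) * hXM + (C (N : ℚ) * F) * eq1
  -- logarithmic derivative identity for F
  have hFG : d⁄dX ℚ F = F * G := by
    have hXne : (X : PowerSeries ℚ) ≠ 0 := X_ne_zero
    apply mul_left_cancel₀ hXne
    linear_combination key - F * hXG
  -- conclude for F^r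
  rw [Derivation.leibniz_pow, hFG, smul_eq_mul, ← mul_assoc, ← pow_succ,
    Nat.sub_add_cancel hr, ← Nat.cast_smul_eq_nsmul ℚ r]
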